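/- Let F be a division ring, R = F[x;σ,δ], and f, g ∈ R of positive degrees m and n. Let φ : P_{n−1} ⊕ P_{m−1} → P_{n+m−1} be the left F-linear map φ(a,b) = af + bg, where P_k denotes skew polynomials of degree ≤ k. Then dim ker φ = deg(gcrd(f,g)), where gcrd(f,g) is a generator of the left ideal Rf + Rg. -/

import Mathlib

variable {F R : Type*}

/-- Degree of a skew polynomial: the sup of the support of its coordinates
in the basis of powers of `X` (degree of `0` is `0` by convention). -/
noncomputable def deg [DivisionRing F] [Ring R] [Module F R]
    (b : Module.Basis ℕ F R) (f : R) : ℕ := (b.repr f).support.sup id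

section Skew
variable [DivisionRing F] [Ring R] [Module F R] (b : Module.Basis ℕ F R)

/-- coefficients vanish above k -/
def Dle (p : R) (k : ℕ) : Prop := ∀ j, k < j → b.repr p j = 0

lemma deg_zero : deg b (0 : R) = 0 := by simp [deg]

lemma lc_ne_zero {p : R} (hp : p ≠ 0) : b.repr p (deg b p) ≠ 0 := by
  have h0 : b.repr p ≠ 0 := by
    simpa using fun h => hp (b.repr.injective (by simpa using h))
  have hs : (b.repr p).support.Nonempty := Finsupp.support_nonempty_iff.2 h0
  have : deg b p ∈ (b.repr p).support := by
    rw [deg, ← Finset.sup'_eq_sup hs]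
    exact Finset.sup'_mem _ (fun a ha bb hbb => by
      rcases le_total a bb with h | h
      · simpa [sup_of_le_right h, max_eq_right h] using hbb
      · simpa [sup_of_le_left h, max_eq_left h] using ha) _ _ _ (fun i hi => hi)
  exact Finsupp.mem_support_iff.1 this

lemma le_deg_of_coeff {p : R} {j : ℕ} (h : b.repr p j ≠ 0) : j ≤ deg b p :=
  Finset.le_sup (f := id) (Finsupp.mem_support_iff.2 h)

lemma Dle_deg (p : R) : Dle b p (deg b p) := fun j hj => by
  by_contra h
  exact absurd (le_deg_of_coeff b h) (not_le.2 hj)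

lemma deg_le_of_Dle {p : R} {k : ℕ} (h : Dle b p k) (hp : p ≠ 0) : deg b p ≤ k := by
  by_contra hc
  exact lc_ne_zero b hp (h _ (not_le.1 hc))

lemma Dle_zero (k : ℕ) : Dle b (0 : R) k := fun j _ => by simp

lemma Dle_mono {p : R} {k k' : ℕ} (hkk : k ≤ k') (h : Dle b p k) : Dle b p k' :=
  fun j hj => h j (lt_of_le_of_lt hkk hj)

lemma Dle_add {p q : R} {k : ℕ} (hp : Dle b p k) (hq : Dle b q k) : Dle b (p + q) k :=
  fun j hj => by simp [hp j hj, hq j hj]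

lemma Dle_smul {p : R} {k : ℕ} (a : F) (hp : Dle b p k) : Dle b (a • p) k :=
  fun j hj => by simp [Finsupp.smul_apply, hp j hj]

lemma Dle_neg {p : R} {k : ℕ} (hp : Dle b p k) : Dle b (-p) k :=
  fun j hj => by simp [hp j hj]

lemma Dle_sub {p q : R} {k : ℕ} (hp : Dle b p k) (hq : Dle b q k) : Dle b (p - q) k := by
  simpa [sub_eq_add_neg] using Dle_add b hp (Dle_neg b hq)

lemma eq_zero_of_coeffs {p : R} (h : ∀ j, b.repr p j = 0) : p = 0 := by
  apply b.repr.injective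
  ext j; simpa using h j

lemma Dle_iff_of_pos {p : R} {n : ℕ} (hn : 0 < n) :
    Dle b p (n - 1) ↔ (p = 0 ∨ deg b p < n) := by
  constructor
  · intro h
    by_cases hp : p = 0
    · exact Or.inl hp
    · exact Or.inr (lt_of_le_of_lt (deg_le_of_Dle b h hp) (by omega))
  · rintro (rfl | h)
    · exact Dle_zero b _
    · intro j hj
      exact Dle_deg b p j (by omega)

variable {σ : F →+* F} {δ : F →+ F} {i : F →+* R} {X : R}
variable (hsmul : ∀ (a : F) (r : R), a • r = i a * r)
variable (hb : ∀ n : ℕ, b n = X ^ n)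
variable (hcomm : ∀ a : F, X * i a = i (σ a) * X + i (δ a))

include hsmul in
lemma mul_smul_left' (a : F) (p q : R) : (a • p) * q = a • (p * q) := by
  rw [hsmul, hsmul, mul_assoc]

include hb in
lemma repr_smul_monomial (u : F) (k : ℕ) :
    b.repr (u • X ^ k) = Finsupp.single k u := by
  rw [← hb k, ← Finsupp.smul_single_one]
  simp

lemma sigma_pow_ne_zero {a : F} (ha : a ≠ 0) (k : ℕ) : (σ ^ k) a ≠ 0 := by
  intro h
  have : Function.Injective (σ ^ k : F →+* F) := RingHom.injective _
  exact ha (this (by simpa using h))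
end Skew

section L2
variable [DivisionRing F] [Ring R] [Module F R] (b : Module.Basis ℕ F R)
variable {σ : F →+* F} {δ : F →+ F} {i : F →+* R} {X : R}
variable (hsmul : ∀ (a : F) (r : R), a • r = i a * r)
variable (hb : ∀ n : ℕ, b n = X ^ n)
variable (hcomm : ∀ a : F, X * i a = i (σ a) * X + i (δ a))

include hsmul hb hcomm in
lemma monomial_mul : ∀ (k t : ℕ) (v : F),
    Dle b (X ^ k * (v • X ^ t)) (k + t) ∧
      b.repr (X ^ k * (v • X ^ t)) (k + t) = (σ ^ k) v := by
  intro k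
  induction k with
  | zero =>
    intro t v
    rw [pow_zero, one_mul]
    constructor
    · intro j hj
      rw [repr_smul_monomial b hb, Finsupp.single_apply, if_neg (by omega)]
    · rw [repr_smul_monomial b hb]
      simp
  | succ k ih =>
    intro t v
    have hX : X * (v • X ^ t) = (σ v) • X ^ (t + 1) + (δ v) • X ^ t := by
      rw [hsmul, ← mul_assoc, hcomm, add_mul, mul_assoc, ← pow_succ', ← hsmul, ← hsmul]
    have key : X ^ (k + 1) * (v • X ^ t)
        = X ^ k * ((σ v) • X ^ (t + 1)) + X ^ k * ((δ v) • X ^ t) := by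
      rw [pow_succ, mul_assoc, hX, mul_add]
    obtain ⟨h1, h1'⟩ := ih (t + 1) (σ v)
    obtain ⟨h2, h2'⟩ := ih t (δ v)
    constructor
    · intro j hj
      rw [key, map_add, Finsupp.add_apply, h1 j (by omega), h2 j (by omega), add_zero]
    · rw [key, map_add b.repr, Finsupp.add_apply, h2 (k + 1 + t) (by omega), add_zero]
      have : k + 1 + t = k + (t + 1) := by omega
      rw [this, h1', pow_succ]
      rfl
end L2

section L3
variable [DivisionRing F] [Ring R] [Module F R] (b : Module.Basis ℕ F R)
variable {σ : F →+* F} {δ : F →+ F} {i : F →+* R} {X : R}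
variable (hsmul : ∀ (a : F) (r : R), a • r = i a * r)
variable (hb : ∀ n : ℕ, b n = X ^ n)
variable (hcomm : ∀ a : F, X * i a = i (σ a) * X + i (δ a))

include hb in
lemma eq_sum_repr (p : R) :
    p = ∑ t ∈ (b.repr p).support, (b.repr p t) • X ^ t := by
  conv_lhs => rw [← b.linearCombination_repr p]
  rw [Finsupp.linearCombination_apply, Finsupp.sum]
  exact Finset.sum_congr rfl fun t _ => by rw [hb t]

include hsmul hb hcomm in
lemma pow_mul_deg (k : ℕ) (q : R) :
    Dle b (X ^ k * q) (k + deg b q) ∧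
      b.repr (X ^ k * q) (k + deg b q) = (σ ^ k) (b.repr q (deg b q)) := by
  have expand : X ^ k * q
      = ∑ t ∈ (b.repr q).support, X ^ k * ((b.repr q t) • X ^ t) := by
    conv_lhs => rw [eq_sum_repr b hb q]
    rw [Finset.mul_sum]
  constructor
  · intro j hj
    rw [expand, map_sum, Finsupp.finset_sum_apply]
    refine Finset.sum_eq_zero fun t ht => ?_
    have h1 : t ≤ deg b q := Finset.le_sup (f := id) ht
    exact (monomial_mul b hsmul hb hcomm k t _).1 j (by omega)
  · rw [expand, map_sum, Finsupp.finset_sum_apply]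
    rw [Finset.sum_eq_single (deg b q)]
    · exact (monomial_mul b hsmul hb hcomm k (deg b q) _).2
    · intro t ht htne
      have h1 : t ≤ deg b q := Finset.le_sup (f := id) ht
      exact (monomial_mul b hsmul hb hcomm k t _).1 _ (by omega)
    · intro hnot
      rw [Finsupp.notMem_support_iff.1 hnot, zero_smul, mul_zero, map_zero]
      simp

include hsmul hb hcomm in
lemma mul_deg_lemma (p q : R) :
    Dle b (p * q) (deg b p + deg b q) ∧
      b.repr (p * q) (deg b p + deg b q)
        = b.repr p (deg b p) * (σ ^ (deg b p)) (b.repr q (deg b q)) := by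
  have expand : p * q
      = ∑ j ∈ (b.repr p).support, (b.repr p j) • (X ^ j * q) := by
    conv_lhs => rw [eq_sum_repr b hb p]
    rw [Finset.sum_mul]
    exact Finset.sum_congr rfl fun j _ => mul_smul_left' hsmul _ _ _
  constructor
  · intro j hj
    rw [expand, map_sum, Finsupp.finset_sum_apply]
    refine Finset.sum_eq_zero fun t ht => ?_
    have h1 : t ≤ deg b p := Finset.le_sup (f := id) ht
    rw [map_smul, Finsupp.smul_apply, smul_eq_mul,
      (pow_mul_deg b hsmul hb hcomm t q).1 j (by omega), mul_zero]
  · rw [expand, map_sum, Finsupp.finset_sum_apply]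
    rw [Finset.sum_eq_single (deg b p)]
    · rw [map_smul, Finsupp.smul_apply, smul_eq_mul,
        (pow_mul_deg b hsmul hb hcomm (deg b p) q).2]
    · intro t ht htne
      have h1 : t ≤ deg b p := Finset.le_sup (f := id) ht
      rw [map_smul, Finsupp.smul_apply, smul_eq_mul,
        (pow_mul_deg b hsmul hb hcomm t q).1 _ (by omega), mul_zero]
    · intro hnot
      rw [Finsupp.notMem_support_iff.1 hnot, zero_smul, map_zero]
      simp

include hsmul hb hcomm in
lemma lc_mul (p q : R) (hp : p ≠ 0) (hq : q ≠ 0) :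
    p * q ≠ 0 ∧ deg b (p * q) = deg b p + deg b q := by
  obtain ⟨hD, htop⟩ := mul_deg_lemma b hsmul hb hcomm p q
  have hlc : b.repr (p * q) (deg b p + deg b q) ≠ 0 := by
    rw [htop]
    exact mul_ne_zero (lc_ne_zero b hp) (sigma_pow_ne_zero (lc_ne_zero b hq) _)
  have hne : p * q ≠ 0 := fun h => by rw [h] at hlc; simp at hlc
  refine ⟨hne, le_antisymm (deg_le_of_Dle b hD hne) (le_deg_of_coeff b hlc)⟩
end L3

section Div
variable [DivisionRing F] [Ring R] [Module F R] (b : Module.Basis ℕ F R)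
variable {σ : F →+* F} {δ : F →+ F} {i : F →+* R} {X : R}
variable (hsmul : ∀ (a : F) (r : R), a • r = i a * r)
variable (hb : ∀ n : ℕ, b n = X ^ n)
variable (hcomm : ∀ a : F, X * i a = i (σ a) * X + i (δ a))

include hb in
lemma deg_smul_monomial {u : F} (hu : u ≠ 0) (k : ℕ) :
    u • X ^ k ≠ 0 ∧ deg b (u • X ^ k) = k ∧ b.repr (u • X ^ k) k = u := by
  have hra := repr_smul_monomial b hb u k
  refine ⟨fun h => ?_, ?_, by rw [hra]; simp⟩
  · rw [h, map_zero] at hra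
    have := congrFun (congrArg (fun f : ℕ →₀ F => (f : ℕ → F)) hra) k
    simp at this
    exact hu this.symm
  · rw [deg, hra, Finsupp.support_single_ne_zero _ hu, Finset.sup_singleton]
    rfl

include hsmul hb hcomm in
lemma div_mod (g : R) (hg : g ≠ 0) (p : R) :
    ∃ q r : R, p = q * g + r ∧ (r = 0 ∨ deg b r < deg b g) := by
  suffices H : ∀ N, ∀ p : R, deg b p < N →
      ∃ q r : R, p = q * g + r ∧ (r = 0 ∨ deg b r < deg b g) from
    H (deg b p + 1) p (Nat.lt_succ_self _)
  intro N
  induction N with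
  | zero => intro p hp; omega
  | succ N ih =>
    intro p hp
    by_cases hp0 : p = 0
    · exact ⟨0, 0, by simp [hp0], Or.inl rfl⟩
    by_cases hlt : deg b p < deg b g
    · exact ⟨0, p, by simp, Or.inr hlt⟩
    push_neg at hlt
    have hwne : (σ ^ (deg b p - deg b g)) (b.repr g (deg b g)) ≠ 0 :=
      sigma_pow_ne_zero (lc_ne_zero b hg) _
    have hune : b.repr p (deg b p) * ((σ ^ (deg b p - deg b g)) (b.repr g (deg b g)))⁻¹ ≠ 0 :=
      mul_ne_zero (lc_ne_zero b hp0) (inv_ne_zero hwne)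
    obtain ⟨hane, hdega, hlca⟩ := deg_smul_monomial b hb hune (deg b p - deg b g)
    set a : R := (b.repr p (deg b p) * ((σ ^ (deg b p - deg b g)) (b.repr g (deg b g)))⁻¹)
        • X ^ (deg b p - deg b g) with ha
    obtain ⟨hDag, htopag⟩ := mul_deg_lemma b hsmul hb hcomm a g
    rw [hdega] at hDag htopag
    have hkn : deg b p - deg b g + deg b g = deg b p := by omega
    rw [hkn] at hDag htopag
    rw [hlca, mul_assoc, inv_mul_cancel₀ hwne, mul_one] at htopag
    have hD : Dle b (p - a * g) (deg b p) := Dle_sub b (Dle_deg b p) hDag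
    have htop' : b.repr (p - a * g) (deg b p) = 0 := by
      rw [map_sub, Finsupp.sub_apply, htopag, sub_self]
    by_cases hp'0 : p - a * g = 0
    · exact ⟨a, 0, by rw [add_zero, ← sub_eq_zero, hp'0], Or.inl rfl⟩
    · have hdp' : deg b (p - a * g) < deg b p := by
        refine lt_of_le_of_ne (deg_le_of_Dle b hD hp'0) fun hEq => ?_
        exact lc_ne_zero b hp'0 (by rw [hEq]; exact htop')
      obtain ⟨q', r, hqr, hr⟩ := ih (p - a * g) (by omega)
      refine ⟨q' + a, r, ?_, hr⟩
      have : p = (p - a * g) + a * g := by abel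
      rw [this, hqr, add_mul]
      abel
end Div

section PmSec
variable [DivisionRing F] [Ring R] [Module F R] (b : Module.Basis ℕ F R)

noncomputable def Pm (k : ℕ) : Submodule F R :=
  (Finsupp.supported F F (Set.Iic k)).comap (b.repr : R →ₗ[F] (ℕ →₀ F))

lemma mem_Pm {p : R} {k : ℕ} : p ∈ Pm b k ↔ Dle b p k := by
  rw [Pm, Submodule.mem_comap]
  rw [Finsupp.mem_supported']
  constructor
  · intro H j hj
    exact H j (by simpa using hj)
  · intro H j hj
    exact H j (by simpa using hj)

noncomputable def PmEquiv (k : ℕ) : (Pm b k) ≃ₗ[F] (↥(Set.Iic k) → F) := by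
  have h1 : Pm b k
      = Submodule.map (b.repr.symm : (ℕ →₀ F) →ₗ[F] R) (Finsupp.supported F F (Set.Iic k)) := by
    rw [Pm, Submodule.comap_equiv_eq_map_symm]
  exact ((LinearEquiv.ofEq _ _ h1).trans
    (b.repr.symm.submoduleMap (Finsupp.supported F F (Set.Iic k))).symm).trans
    ((Finsupp.supportedEquivFinsupp (Set.Iic k)).trans
      (Finsupp.linearEquivFunOnFinite F F ↥(Set.Iic k)))

instance PmFD (k : ℕ) : FiniteDimensional F (Pm b k) :=
  (PmEquiv b k).symm.finiteDimensional

lemma finrank_Pm (k : ℕ) : Module.finrank F (Pm b k) = k + 1 := by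
  rw [(PmEquiv b k).finrank_eq, Module.finrank_pi, ← Set.toFinset_card,
    Set.toFinset_Iic, Nat.card_Iic]
end PmSec

section ProdSec
variable {V W : Type*} [DivisionRing F] [AddCommGroup V] [AddCommGroup W]
  [Module F V] [Module F W]

def prodSubEquiv (p : Submodule F V) (q : Submodule F W) :
    (p.prod q) ≃ₗ[F] (p × q) where
  toFun x := (⟨x.1.1, x.2.1⟩, ⟨x.1.2, x.2.2⟩)
  invFun y := ⟨(y.1.1, y.2.1), ⟨y.1.2, y.2.2⟩⟩
  left_inv x := rfl
  right_inv y := rfl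
  map_add' x y := rfl
  map_smul' a x := rfl

instance prodFD (p : Submodule F V) (q : Submodule F W)
    [FiniteDimensional F p] [FiniteDimensional F q] :
    FiniteDimensional F (p.prod q) :=
  (prodSubEquiv p q).symm.finiteDimensional

lemma finrank_prodSub (p : Submodule F V) (q : Submodule F W)
    [FiniteDimensional F p] [FiniteDimensional F q] :
    Module.finrank F (p.prod q) = Module.finrank F p + Module.finrank F q := by
  rw [(prodSubEquiv p q).finrank_eq, Module.finrank_prod]
end ProdSec

section RMul
variable [DivisionRing F] [Ring R] [Module F R] {i : F →+* R}

def rmul (hsmul : ∀ (a : F) (r : R), a • r = i a * r) (y : R) : R →ₗ[F] R where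
  toFun c := c * y
  map_add' c d := add_mul c d y
  map_smul' a c := by simp only [RingHom.id_apply]; rw [hsmul, hsmul, mul_assoc]
end RMul

/-- The kernel of `(a,b) ↦ af + bg` on `P_{n−1} ⊕ P_{m−1}` has dimension
`deg (gcrd f g)`, where `gcrd f g` generates `Rf + Rg`. -/
theorem finrank_ker_eq_deg_gcrd [DivisionRing F] [Ring R] [Module F R]
    (σ : F →+* F) (δ : F →+ F)
    (hδ : ∀ a b : F, δ (a * b) = σ a * δ b + δ a * b)
    (i : F →+* R) (X : R)
    (hsmul : ∀ (a : F) (r : R), a • r = i a * r)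
    (b : Module.Basis ℕ F R) (hb : ∀ n : ℕ, b n = X ^ n)
    (hcomm : ∀ a : F, X * i a = i (σ a) * X + i (δ a))
    (f g : R) (hf : 0 < deg b f) (hg : 0 < deg b g)
    (M : R) (hM : Ideal.span {f} ⊔ Ideal.span {g} = Ideal.span {M})
    (K : Submodule F (R × R))
    (hK : (K : Set (R × R)) = {p : R × R |
      (p.1 = 0 ∨ deg b p.1 < deg b g) ∧ (p.2 = 0 ∨ deg b p.2 < deg b f) ∧
      p.1 * f + p.2 * g = 0}) :
    Module.finrank F K = deg b M := by
  classical
  have hf0 : f ≠ 0 := by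
    intro h; rw [h, deg_zero] at hf; exact absurd hf (lt_irrefl 0)
  have hg0 : g ≠ 0 := by
    intro h; rw [h, deg_zero] at hg; exact absurd hg (lt_irrefl 0)
  -- f and g are left multiples of M
  obtain ⟨u, hu⟩ : ∃ u : R, u * M = f := by
    have h1 : f ∈ Ideal.span ({M} : Set R) := by
      rw [← hM]; exact Submodule.mem_sup_left (Ideal.subset_span rfl)
    obtain ⟨u, hu⟩ := Submodule.mem_span_singleton.1 h1
    exact ⟨u, hu⟩
  obtain ⟨v, hv⟩ : ∃ v : R, v * M = g := by
    have h1 : g ∈ Ideal.span ({M} : Set R) := by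
      rw [← hM]; exact Submodule.mem_sup_right (Ideal.subset_span rfl)
    obtain ⟨v, hv⟩ := Submodule.mem_span_singleton.1 h1
    exact ⟨v, hv⟩
  have hM0 : M ≠ 0 := fun h => hf0 (by rw [← hu, h, mul_zero])
  have hu0 : u ≠ 0 := fun h => hf0 (by rw [← hu, h, zero_mul])
  have hdM : deg b M ≤ deg b f := by
    have h2 := (lc_mul b hsmul hb hcomm u M hu0 hM0).2
    rw [hu] at h2; omega
  -- Bezout (no degree bounds)
  obtain ⟨u', v', hM'⟩ : ∃ u' v' : R, u' * f + v' * g = M := by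
    have h1 : M ∈ Ideal.span ({f} : Set R) ⊔ Ideal.span ({g} : Set R) := by
      rw [hM]; exact Ideal.subset_span rfl
    obtain ⟨y, hy, z, hz, hyz⟩ := Submodule.mem_sup.1 h1
    obtain ⟨u', hu'⟩ := Submodule.mem_span_singleton.1 hy
    obtain ⟨v', hv'⟩ := Submodule.mem_span_singleton.1 hz
    exact ⟨u', v', by rw [show u' * f = y from hu', show v' * g = z from hv', hyz]⟩
  set φ : R × R →ₗ[F] R := (rmul hsmul f).coprod (rmul hsmul g) with hφdef
  have hφ_apply : ∀ p : R × R, φ p = p.1 * f + p.2 * g := fun p => rfl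
  set Dm : Submodule F (R × R) := (Pm b (deg b g - 1)).prod (Pm b (deg b f - 1)) with hDmdef
  set ψ := φ.domRestrict Dm with hψdef
  -- K is the kernel of ψ
  have hKmap : K = Submodule.map Dm.subtype (LinearMap.ker ψ) := by
    ext x
    rw [← SetLike.mem_coe, hK]
    simp only [Set.mem_setOf_eq, Submodule.mem_map]
    constructor
    · rintro ⟨h1, h2, h3⟩
      refine ⟨⟨x, Submodule.mem_prod.2 ⟨(mem_Pm b).2 ((Dle_iff_of_pos b hg).2 h1),
        (mem_Pm b).2 ((Dle_iff_of_pos b hf).2 h2)⟩⟩, ?_, rfl⟩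
      simp only [LinearMap.mem_ker, hψdef, LinearMap.domRestrict_apply]
      rw [hφ_apply]; exact h3
    · rintro ⟨y, hker, rfl⟩
      have h3 : φ y.1 = 0 := by
        have := LinearMap.mem_ker.1 hker
        rw [hψdef, LinearMap.domRestrict_apply] at this
        exact this
      have hy1 := (Submodule.mem_prod.1 y.2).1
      have hy2 := (Submodule.mem_prod.1 y.2).2
      rw [hφ_apply] at h3
      exact ⟨(Dle_iff_of_pos b hg).1 ((mem_Pm b).1 hy1),
        (Dle_iff_of_pos b hf).1 ((mem_Pm b).1 hy2), h3⟩
  have hrankK : Module.finrank F K = Module.finrank F (LinearMap.ker ψ) := by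
    rw [hKmap]
    exact ((Submodule.equivMapOfInjective Dm.subtype
      (Submodule.injective_subtype Dm) (LinearMap.ker ψ)).finrank_eq).symm
  -- common left multiple h0 of small degree
  obtain ⟨h0, w0, hh0, hdegh0, hh0f⟩ :
      ∃ h0 w0 : R, h0 ≠ 0 ∧ deg b h0 ≤ deg b g ∧ h0 * f = w0 * g := by
    set Dm2 : Submodule F (R × R) := (Pm b (deg b g)).prod (Pm b (deg b f)) with hDm2def
    have himg : ∀ y : Dm2, φ y.1 ∈ Pm b (deg b f + deg b g) := by
      intro y
      have ha1 := (Submodule.mem_prod.1 y.2).1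
      have hb1 := (Submodule.mem_prod.1 y.2).2
      rw [mem_Pm, hφ_apply]
      apply Dle_add
      · by_cases h : y.1.1 = 0
        · rw [h, zero_mul]; exact Dle_zero b _
        · have hda : deg b y.1.1 ≤ deg b g := deg_le_of_Dle b ((mem_Pm b).1 ha1) h
          exact Dle_mono b (by omega) (mul_deg_lemma b hsmul hb hcomm y.1.1 f).1
      · by_cases h : y.1.2 = 0
        · rw [h, zero_mul]; exact Dle_zero b _
        · have hdb : deg b y.1.2 ≤ deg b f := deg_le_of_Dle b ((mem_Pm b).1 hb1) h
          exact Dle_mono b (by omega) (mul_deg_lemma b hsmul hb hcomm y.1.2 g).1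
    set θ : Dm2 →ₗ[F] Pm b (deg b f + deg b g) :=
      LinearMap.codRestrict _ (φ.domRestrict Dm2) himg with hθdef
    have hnotinj : ¬ Function.Injective θ := by
      intro hinj
      have hle := LinearMap.finrank_le_finrank_of_injective hinj
      rw [finrank_Pm, hDm2def, finrank_prodSub, finrank_Pm, finrank_Pm] at hle
      omega
    rw [← LinearMap.ker_eq_bot] at hnotinj
    obtain ⟨y, hyker, hy0⟩ := (Submodule.ne_bot_iff _).1 hnotinj
    have hψy : φ y.1 = 0 := by
      have h1 := LinearMap.mem_ker.1 hyker
      have h2 := congrArg Subtype.val h1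
      rw [hθdef] at h2
      exact h2
    rw [hφ_apply] at hψy
    have ha1ne : y.1.1 ≠ 0 := by
      intro h
      apply hy0
      have hb1z : y.1.2 = 0 := by
        by_contra hbne
        rw [h, zero_mul, zero_add] at hψy
        exact (lc_mul b hsmul hb hcomm y.1.2 g hbne hg0).1 hψy
      apply Subtype.ext
      exact Prod.ext h hb1z
    refine ⟨y.1.1, -y.1.2, ha1ne,
      deg_le_of_Dle b ((mem_Pm b).1 (Submodule.mem_prod.1 y.2).1) ha1ne, ?_⟩
    rw [neg_mul]
    exact eq_neg_of_add_eq_zero_left hψy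
  -- range of φ on Dm
  have hrange : Submodule.map φ Dm
      = Submodule.map (rmul hsmul M) (Pm b (deg b f + deg b g - 1 - deg b M)) := by
    ext x
    simp only [Submodule.mem_map]
    constructor
    · rintro ⟨y, hmemD, rfl⟩
      have ha1 : Dle b y.1 (deg b g - 1) := (mem_Pm b).1 (Submodule.mem_prod.1 hmemD).1
      have hb1 : Dle b y.2 (deg b f - 1) := (mem_Pm b).1 (Submodule.mem_prod.1 hmemD).2
      have hx : φ y = (y.1 * u + y.2 * v) * M := by
        rw [hφ_apply, add_mul, mul_assoc, mul_assoc, hu, hv]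
      have hxD : Dle b (φ y) (deg b f + deg b g - 1) := by
        rw [hφ_apply]
        apply Dle_add
        · by_cases h : y.1 = 0
          · rw [h, zero_mul]; exact Dle_zero b _
          · have hda := deg_le_of_Dle b ha1 h
            exact Dle_mono b (by omega) (mul_deg_lemma b hsmul hb hcomm y.1 f).1
        · by_cases h : y.2 = 0
          · rw [h, zero_mul]; exact Dle_zero b _
          · have hdb := deg_le_of_Dle b hb1 h
            exact Dle_mono b (by omega) (mul_deg_lemma b hsmul hb hcomm y.2 g).1
      refine ⟨y.1 * u + y.2 * v, ?_, hx.symm⟩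
      rw [mem_Pm]
      by_cases hc : y.1 * u + y.2 * v = 0
      · rw [hc]; exact Dle_zero b _
      · have hne : φ y ≠ 0 := by
          rw [hx]; exact (lc_mul b hsmul hb hcomm _ M hc hM0).1
        have hxc : deg b (φ y) = deg b (y.1 * u + y.2 * v) + deg b M := by
          rw [hx]; exact (lc_mul b hsmul hb hcomm _ M hc hM0).2
        have hle := deg_le_of_Dle b hxD hne
        exact Dle_mono b (by omega) (Dle_deg b _)
    · rintro ⟨c, hc, rfl⟩
      have hcD : Dle b c (deg b f + deg b g - 1 - deg b M) := (mem_Pm b).1 hc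
      obtain ⟨q, a1, hdiv, hrem⟩ := div_mod b hsmul hb hcomm h0 hh0 (c * u')
      have hsum : a1 * f + (c * v' + q * w0) * g = c * M := by
        have e1 : a1 = c * u' - q * h0 := by rw [hdiv]; abel
        rw [e1, sub_mul, add_mul, mul_assoc q h0 f, hh0f, ← mul_assoc, ← hM',
          mul_add, ← mul_assoc, ← mul_assoc]
        abel
      have hDcM : Dle b (c * M) (deg b f + deg b g - 1) := by
        by_cases hcz : c = 0
        · rw [hcz, zero_mul]; exact Dle_zero b _
        · have h2 := (lc_mul b hsmul hb hcomm c M hcz hM0).2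
          have hdc := deg_le_of_Dle b hcD hcz
          have := (mul_deg_lemma b hsmul hb hcomm c M).1
          exact Dle_mono b (by omega) this
      have hDa1 : Dle b a1 (deg b g - 1) := by
        rcases hrem with h | h
        · rw [h]; exact Dle_zero b _
        · exact Dle_mono b (by omega) (Dle_deg b _)
      have hDaf : Dle b (a1 * f) (deg b f + deg b g - 1) := by
        by_cases ha : a1 = 0
        · rw [ha, zero_mul]; exact Dle_zero b _
        · have hda := deg_le_of_Dle b hDa1 ha
          exact Dle_mono b (by omega) (mul_deg_lemma b hsmul hb hcomm a1 f).1
      have hDb2 : Dle b (c * v' + q * w0) (deg b f - 1) := by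
        by_cases h : c * v' + q * w0 = 0
        · rw [h]; exact Dle_zero b _
        · have hb2g : (c * v' + q * w0) * g = c * M - a1 * f := by
            rw [← hsum]; abel
          have hD : Dle b ((c * v' + q * w0) * g) (deg b f + deg b g - 1) := by
            rw [hb2g]; exact Dle_sub b hDcM hDaf
          have hne := lc_mul b hsmul hb hcomm _ g h hg0
          have hle := deg_le_of_Dle b hD hne.1
          rw [hne.2] at hle
          exact Dle_mono b (by omega) (Dle_deg b _)
      refine ⟨(a1, c * v' + q * w0),
        Submodule.mem_prod.2 ⟨(mem_Pm b).2 hDa1, (mem_Pm b).2 hDb2⟩, ?_⟩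
      rw [hφ_apply]
      exact hsum
  have hinjM : Function.Injective (rmul hsmul M) := by
    intro c c' h
    by_contra hne
    have hsub : (c - c') * M = 0 := by
      rw [sub_mul, show c * M = c' * M from h, sub_self]
    exact (lc_mul b hsmul hb hcomm (c - c') M (sub_ne_zero.2 hne) hM0).1 hsub
  have e1 : Module.finrank F (LinearMap.range ψ) + Module.finrank F (LinearMap.ker ψ)
      = Module.finrank F Dm := LinearMap.finrank_range_add_finrank_ker ψ
  have e2 : LinearMap.range ψ = Submodule.map φ Dm := by
    rw [hψdef, LinearMap.range_domRestrict]
  have e3 : Module.finrank F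
      (Submodule.map (rmul hsmul M) (Pm b (deg b f + deg b g - 1 - deg b M)))
      = (deg b f + deg b g - 1 - deg b M) + 1 :=
    ((Submodule.equivMapOfInjective _ hinjM _).finrank_eq.symm).trans (finrank_Pm b _)
  have e4 : Module.finrank F Dm = (deg b g - 1 + 1) + (deg b f - 1 + 1) := by
    rw [hDmdef, finrank_prodSub, finrank_Pm, finrank_Pm]
  rw [e2, hrange, e3, e4] at e1
  rw [hrankK]
  omega
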